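/- arXiv:1909.12015 — 2 statements merged into one kernel-verified Lean document; each statement's English description precedes it below -/
import Mathlib

section
/- Let a : ℕ → ℤ be a sequence with a(i) ∈ {-1, 1} for all i. Suppose that for every i and every length k with 1 ≤ k ≤ 5, the window sum |a(i) + a(i+1) + ... + a(i+k-1)| ≤ 2. Then for every i and every n ≥ 0, the window sum |Σ_{j=i}^{i+n-1} a(j)| ≤ ⌊n/5⌋ + m(n mod 5), where m(0) = 0, m(1) = m(3) = 1, and m(2) = m(4) = 2. -/
theorem stmt_7 (a : ℕ → ℤ) (ha : ∀ i, a i = 1 ∨ a i = -1)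
    (htame : ∀ i k, 1 ≤ k → k ≤ 5 → |∑ j ∈ Finset.Ico i (i + k), a j| ≤ 2)
    (m : ℕ → ℤ) (hm0 : m 0 = 0) (hm1 : m 1 = 1) (hm2 : m 2 = 2) (hm3 : m 3 = 1)
    (hm4 : m 4 = 2) :
    ∀ i n, |∑ j ∈ Finset.Ico i (i + n), a j| ≤ (n / 5 : ℕ) + m (n % 5) := by
  have hpar : ∀ (i n : ℕ), (∑ j ∈ Finset.Ico i (i + n), a j) % 2 = (n : ℤ) % 2 := by
    intro i n
    induction n with
    | zero => simp
    | succ n ih =>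
      rw [show i + (n+1) = (i+n) + 1 from rfl, Finset.sum_Ico_succ_top (by omega)]
      rcases ha (i+n) with h | h <;> push_cast <;> omega
  have h5 : ∀ i, |∑ j ∈ Finset.Ico i (i + 5), a j| ≤ 1 := by
    intro i
    have h1 := htame i 5 (by norm_num) (by norm_num)
    have h2 := hpar i 5
    rw [abs_le] at h1 ⊢
    omega
  have hr : ∀ i r, r ≤ 4 → |∑ j ∈ Finset.Ico i (i + r), a j| ≤ m r := by
    intro i r hr4
    interval_cases r
    · simp [hm0]
    · have h1 := htame i 1 (by norm_num) (by norm_num)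
      have h2 := hpar i 1
      rw [abs_le] at h1 ⊢; rw [hm1]; omega
    · rw [hm2]; exact htame i 2 (by norm_num) (by norm_num)
    · have h1 := htame i 3 (by norm_num) (by norm_num)
      have h2 := hpar i 3
      rw [abs_le] at h1 ⊢; rw [hm3]; omega
    · rw [hm4]; exact htame i 4 (by norm_num) (by norm_num)
  have main : ∀ (q : ℕ), ∀ (i r : ℕ), r ≤ 4 →
      |∑ j ∈ Finset.Ico i (i + (5*q + r)), a j| ≤ (q : ℤ) + m r := by
    intro q
    induction q with
    | zero => intro i r h; simpa using hr i r h
    | succ q ih =>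
      intro i r h
      have hsplit : ∑ j ∈ Finset.Ico i (i + (5*(q+1) + r)), a j
          = (∑ j ∈ Finset.Ico i (i + 5), a j)
            + ∑ j ∈ Finset.Ico (i+5) ((i+5) + (5*q + r)), a j := by
        rw [show i + (5*(q+1) + r) = (i+5) + (5*q + r) by ring]
        exact (Finset.sum_Ico_consecutive a (by omega) (by omega)).symm
      rw [hsplit]
      calc |(∑ j ∈ Finset.Ico i (i + 5), a j)
            + ∑ j ∈ Finset.Ico (i+5) ((i+5) + (5*q + r)), a j|
          ≤ |∑ j ∈ Finset.Ico i (i + 5), a j|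
            + |∑ j ∈ Finset.Ico (i+5) ((i+5) + (5*q + r)), a j| := abs_add_le _ _
        _ ≤ 1 + ((q : ℤ) + m r) := add_le_add (h5 i) (ih (i+5) r h)
        _ = ((q+1 : ℕ) : ℤ) + m r := by push_cast; ring
  intro i n
  have h := main (n/5) i (n%5) (by omega)
  have hn : 5 * (n/5) + n % 5 = n := by omega
  rw [hn] at h
  exact h
end

section
/- Let n ≥ 8 be even, and define the coloring ψ : ZMod n → ZMod 3 of the cycle C_n whose consecutive values are 0,1,2,1,2,1,0,1 followed by the pattern 0,1 repeated (n-8)/2 times. Then ψ is a proper 3-coloring, it is tame (every window of at most 5 consecutive edge values δ(i) ∈ {-1,1} has sum of absolute value at most 2), and the total sum Σ_i δ(i) = 0. -/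
private def fpat : ℕ → ZMod 3 := fun k =>
  if k < 8 then ([0,1,2,1,2,1,0,1] : List (ZMod 3)).getD k 0
  else if (k - 8) % 2 = 0 then 0 else 1

private def Dpat : ℕ → ℤ := fun k =>
  if k < 8 then ([1,1,-1,1,-1,-1,1,-1] : List ℤ).getD k 0
  else if (k - 8) % 2 = 0 then 1 else -1

private def Tpat : ℕ → ℤ := fun m =>
  if m < 8 then ([0,1,2,1,2,1,0,1] : List ℤ).getD m 0
  else if (m - 8) % 2 = 0 then 0 else 1

private lemma Dpat_pm (k : ℕ) : Dpat k = 1 ∨ Dpat k = -1 := by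
  unfold Dpat
  rcases Nat.lt_or_ge k 8 with h | h
  · interval_cases k <;> decide
  · rw [if_neg (by omega)]
    split <;> simp

private lemma fpat_step (k : ℕ) :
    fpat (k+1) = fpat k + (Dpat k : ZMod 3) ∧ fpat (k+1) ≠ fpat k := by
  rcases Nat.lt_or_ge k 8 with h | h
  · interval_cases k <;> (constructor <;> decide)
  · obtain ⟨m, rfl⟩ := Nat.exists_eq_add_of_le h
    simp only [fpat, Dpat, if_neg (show ¬ (8 + m < 8) by omega),
      if_neg (show ¬ (8 + m + 1 < 8) by omega),
      show 8 + m - 8 = m from by omega, show 8 + m + 1 - 8 = m + 1 from by omega]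
    rcases Nat.even_or_odd m with ⟨t, ht⟩ | ⟨t, ht⟩
    · rw [if_neg (by omega), if_pos (by omega), if_pos (by omega)]
      constructor <;> decide
    · rw [if_pos (by omega), if_neg (by omega), if_neg (by omega)]
      constructor <;> decide

private lemma Tpat_step (k : ℕ) : Tpat (k+1) = Tpat k + Dpat k := by
  rcases Nat.lt_or_ge k 8 with h | h
  · interval_cases k <;> decide
  · obtain ⟨m, rfl⟩ := Nat.exists_eq_add_of_le h
    simp only [Tpat, Dpat, if_neg (show ¬ (8 + m < 8) by omega),
      if_neg (show ¬ (8 + m + 1 < 8) by omega),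
      show 8 + m - 8 = m from by omega, show 8 + m + 1 - 8 = m + 1 from by omega]
    rcases Nat.even_or_odd m with ⟨t, ht⟩ | ⟨t, ht⟩
    · rw [if_neg (by omega), if_pos (by omega), if_pos (by omega)]; ring
    · rw [if_pos (by omega), if_neg (by omega), if_neg (by omega)]; ring

private lemma Tpat_bounds (m : ℕ) : 0 ≤ Tpat m ∧ Tpat m ≤ 2 := by
  unfold Tpat
  rcases Nat.lt_or_ge m 8 with h | h
  · interval_cases m <;> constructor <;> decide
  · rw [if_neg (by omega)]
    split <;> constructor <;> norm_num

theorem stmt_17 (n : ℕ) (hn : 8 ≤ n) (heven : Even n)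
    (ψ : ZMod n → ZMod 3)
    (hψ : ∀ k : ℕ, k < n → ψ (k : ZMod n) =
      (if k < 8 then ([0,1,2,1,2,1,0,1] : List (ZMod 3)).getD k 0
       else if (k - 8) % 2 = 0 then 0 else 1)) :
    (∀ i : ZMod n, ψ (i + 1) ≠ ψ i) ∧
    (∀ δ : ZMod n → ℤ,
      (∀ i, (δ i = 1 ∨ δ i = -1) ∧ ψ (i + 1) = ψ i + (δ i : ZMod 3)) →
      ((∀ (i k : ℕ), 1 ≤ k → k ≤ 5 →
        |∑ j ∈ Finset.Ico i (i + k), δ (j : ZMod n)| ≤ 2) ∧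
       (∑ j ∈ Finset.range n, δ (j : ZMod n)) = 0)) := by
  haveI : NeZero n := ⟨by omega⟩
  obtain ⟨t, ht⟩ := heven
  have hψf : ∀ k : ℕ, k < n → ψ (k : ZMod n) = fpat k := by
    intro k hk; rw [hψ k hk]; rfl
  have hfn : fpat n = 0 := by
    unfold fpat; rw [if_neg (by omega), if_pos (by omega)]
  have hsucc : ∀ k : ℕ, k < n → ψ ((k : ZMod n) + 1) = fpat (k+1) := by
    intro k hk
    rcases Nat.lt_or_ge (k+1) n with h | h
    · have hc : ((k : ZMod n) + 1) = ((k+1 : ℕ) : ZMod n) := by push_cast; ring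
      rw [hc, hψf _ h]
    · have hkn : k + 1 = n := by omega
      have hc : ((k : ZMod n) + 1) = ((0 : ℕ) : ZMod n) := by
        have h2 : ((k+1 : ℕ) : ZMod n) = 0 := by rw [hkn]; exact ZMod.natCast_self n
        push_cast at h2 ⊢
        rw [h2]
      rw [hc, hψf 0 (by omega), hkn, hfn]
      decide
  constructor
  · intro i
    have hk : i.val < n := ZMod.val_lt i
    have hi : ((i.val : ℕ) : ZMod n) = i := by
      simp [ZMod.natCast_val, ZMod.cast_id]
    rw [← hi, hψf _ hk, hsucc _ hk]
    exact (fpat_step i.val).2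
  · intro δ hd
    have hδval : ∀ k : ℕ, k < n → δ (k : ZMod n) = Dpat k := by
      intro k hk
      obtain ⟨h1, h2⟩ := hd (k : ZMod n)
      rw [hψf k hk, hsucc k hk] at h2
      have h3 := (fpat_step k).1
      have h4 : ((δ (k : ZMod n) : ℤ) : ZMod 3) = ((Dpat k : ℤ) : ZMod 3) := by
        have := h2.symm.trans h3
        exact add_left_cancel this
      rcases h1 with h | h <;> rcases Dpat_pm k with h' | h' <;>
        rw [h, h'] at h4 ⊢ <;> first
          | rfl
          | (exfalso; push_cast at h4; exact absurd h4 (by decide))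
    set d : ℕ → ℤ := fun j => δ ((j : ℕ) : ZMod n) with hd_def
    set S : ℕ → ℤ := fun m => ∑ j ∈ Finset.range m, d j with hS_def
    have hS : ∀ m, m ≤ n → S m = Tpat m := by
      intro m
      induction m with
      | zero => intro _; simp [hS_def]; decide
      | succ m ih =>
        intro h
        have : S (m+1) = S m + d m := Finset.sum_range_succ d m
        rw [this, ih (by omega), Tpat_step m]
        congr 1
        exact hδval m (by omega)
    have hTn : Tpat n = 0 := by
      unfold Tpat; rw [if_neg (by omega), if_pos (by omega)]
    have hSn : S n = 0 := by rw [hS n le_rfl, hTn]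
    have hdper : ∀ j, d (j + n) = d j := by
      intro j
      simp only [hd_def]
      congr 1
      push_cast [ZMod.natCast_self]
      ring
    have hSper : ∀ m, S (m + n) = S m := by
      intro m
      induction m with
      | zero => rw [Nat.zero_add, hSn]; simp [hS_def]
      | succ m ih =>
        have h1 : S (m + 1 + n) = S (m + n) + d (m + n) := by
          rw [show m + 1 + n = (m + n) + 1 from by omega]
          exact Finset.sum_range_succ d (m + n)
        rw [h1, ih, hdper]
        exact (Finset.sum_range_succ d m).symm
    have hSq : ∀ q r, S (q * n + r) = S r := by
      intro q
      induction q with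
      | zero => intro r; simp
      | succ q ih =>
        intro r
        rw [show (q+1) * n + r = (q * n + r) + n from by ring, hSper, ih]
    have hbound : ∀ m, 0 ≤ S m ∧ S m ≤ 2 := by
      intro m
      have hm : S m = S ((m / n) * n + m % n) := by
        congr 1
        exact (Nat.div_add_mod' m n).symm
      rw [hm, hSq, hS _ (le_of_lt (Nat.mod_lt _ (by omega)))]
      exact Tpat_bounds _
    constructor
    · intro i k hk1 hk5
      have hsum : ∑ j ∈ Finset.Ico i (i + k), δ ((j : ℕ) : ZMod n) = S (i + k) - S i := by
        rw [hS_def]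
        exact Finset.sum_Ico_eq_sub d (by omega)
      rw [hsum]
      obtain ⟨a1, a2⟩ := hbound (i + k)
      obtain ⟨b1, b2⟩ := hbound i
      rw [abs_le]
      constructor <;> linarith
    · exact hSn
end
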